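/- arXiv:0710.0652 — 2 statements merged into one kernel-verified Lean document; each statement's English description precedes it below -/
import Mathlib

section
/- Let N* and N̂* be μ-generic r×r matrices over R such that the pairs (D_μ, N*) and (D_μ, N̂*) are pair equivalent. Then the Littlewood–Richardson fillings computed from N* and from N̂* via the determinantal formula coincide: for all 1 ≤ i ≤ j ≤ r, k_{ij} computed from N* equals k_{ij} computed from N̂*. In particular, pairs of full-rank matrices in the same GL_r(R)^3-orbit yield identical Littlewood–Richardson fillings. -/
open Matrix

section Defs

variable {R : Type*} [CommRing R]

/-- The order `‖a‖` of `a ∈ R` with respect to a uniformizing parameter `t`: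
the number of times `t` divides `a`, with `‖0‖ = ∞`. Valued in `ℕ∞`. -/
noncomputable def ord (t a : R) : ℕ∞ := emultiplicity t a

/-- The order of `a` as an integer (junk value `0` when the order is not finite). -/
noncomputable def ordZ (t a : R) : ℤ := multiplicity t a

/-- `D_μ = diag(t^{μ_1}, …, t^{μ_r})` for a 1-indexed tuple `μ : ℕ → ℕ`. -/
noncomputable def Dmu (t : R) (r : ℕ) (μ : ℕ → ℕ) : Matrix (Fin r) (Fin r) R :=
  Matrix.diagonal fun i => t ^ μ (i.1 + 1)

/-- Upper triangular matrix. -/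
def UpperTri {r : ℕ} (M : Matrix (Fin r) (Fin r) R) : Prop := ∀ i j : Fin r, j < i → M i j = 0

/-- Lower triangular matrix. -/
def LowerTri {r : ℕ} (M : Matrix (Fin r) (Fin r) R) : Prop := ∀ i j : Fin r, i < j → M i j = 0

/-- `Q ∈ GL_r(R)` is `μ`-admissible iff `D_μ · Q · D_μ⁻¹` has all entries in `R`,
i.e. `D_μ · Q = P · D_μ` for some matrix `P` over `R`. -/
def MuAdmissible (t : R) (r : ℕ) (μ : ℕ → ℕ) (Q : Matrix (Fin r) (Fin r) R) : Prop :=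
  IsUnit Q.det ∧ ∃ P : Matrix (Fin r) (Fin r) R, Dmu t r μ * Q = P * Dmu t r μ

/-- `inv(M) = μ`: the (1-indexed, non-increasing) invariant partition of `M`,
given by the Smith normal form `P · M · Q⁻¹ = D_μ` with `P, Q ∈ GL_r(R)`. -/
def SmithInv (t : R) (r : ℕ) (M : Matrix (Fin r) (Fin r) R) (μ : ℕ → ℕ) : Prop :=
  (∀ i, 1 ≤ i → i < r → μ (i + 1) ≤ μ i) ∧
  ∃ P Q : Matrix (Fin r) (Fin r) R, IsUnit P.det ∧ IsUnit Q.det ∧ P * M * Q = Dmu t r μ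

/-- Pair equivalence: `(M', N') = (P·M·Q⁻¹, Q·N·T⁻¹)` for some `P, Q, T ∈ GL_r(R)`. -/
def PairEquiv {r : ℕ} (M N M' N' : Matrix (Fin r) (Fin r) R) : Prop :=
  ∃ P Q T : Matrix (Fin r) (Fin r) R, IsUnit P.det ∧ IsUnit Q.det ∧ IsUnit T.det ∧
    P * M = M' * Q ∧ Q * N = N' * T

/-- `|μ_I|` for an index set `I` (1-indexed partition `μ`, 0-indexed `Fin`). -/
def wt (r : ℕ) (μ : ℕ → ℕ) {k : ℕ} (I : Fin k → Fin r) : ℕ := ∑ s, μ ((I s).1 + 1)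

/-- The columns `r-s+1, …, r` (the last `s` columns), 0-indexed. -/
def lastCols (r s : ℕ) (h : s ≤ r) : Fin s → Fin r :=
  fun p => ⟨r - s + p.1, by have := p.isLt; omega⟩

/-- The rows `1, …, s` (the first `s` rows), 0-indexed. -/
def firstRows (r s : ℕ) (h : s ≤ r) : Fin s → Fin r :=
  fun p => ⟨p.1, lt_of_lt_of_le p.isLt h⟩

/-- The set of (1-indexed) rows `{1,…,a} ∪ {b,…,r}`, as a `Finset (Fin r)`. -/
def rowsSet (r a b : ℕ) : Finset (Fin r) :=
  Finset.univ.filter fun x => x.1 + 1 ≤ a ∨ b ≤ x.1 + 1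

/-- The minor of `W` using the rows in the `Finset` `s` (in increasing order) and the
last `s.card` columns. -/
noncomputable def rsMinor {r : ℕ} (W : Matrix (Fin r) (Fin r) R) (s : Finset (Fin r)) : R :=
  (W.submatrix (fun p : Fin s.card => s.orderEmbOfFin rfl p)
    (lastCols r s.card (by simpa using s.card_le_univ))).det

/-- Order (in `ℕ∞`) of the minor of `W` with rows `{1,…,a} ∪ {b,…,r}` and right-justified
columns. -/
noncomputable def dMinor (t : R) {r : ℕ} (W : Matrix (Fin r) (Fin r) R) (a b : ℕ) : ℕ∞ :=
  ord t (rsMinor W (rowsSet r a b))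

/-- Integer-valued version of `dMinor`. -/
noncomputable def dMinorZ (t : R) {r : ℕ} (W : Matrix (Fin r) (Fin r) R) (a b : ℕ) : ℤ :=
  ordZ t (rsMinor W (rowsSet r a b))

/-- `N* = Q_U·Q_L·N·T_L·T_U` is a `μ`-generic matrix obtained from `N`. -/
def MuGenericVia (t : R) (r : ℕ) (μ : ℕ → ℕ) (N Nstar : Matrix (Fin r) (Fin r) R) : Prop :=
  ∃ QU QL TL TU QhL QhU : Matrix (Fin r) (Fin r) R,
    Nstar = QU * QL * N * (TL * TU) ∧
    UpperTri QU ∧ MuAdmissible t r μ QU ∧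
    LowerTri QL ∧ MuAdmissible t r μ QL ∧
    UpperTri TU ∧ IsUnit TU.det ∧
    (∃ (σ : Equiv.Perm (Fin r)) (L : Matrix (Fin r) (Fin r) R),
      LowerTri L ∧ TL = σ.permMatrix R * L) ∧
    IsUnit TL.det ∧
    UpperTri (QL * N * TL) ∧
    QU * QL = QhL * QhU ∧
    LowerTri QhL ∧ MuAdmissible t r μ QhL ∧
    UpperTri QhU ∧ MuAdmissible t r μ QhU ∧
    ∀ (k : ℕ), k ≤ r → ∀ I J : Fin k → Fin r, StrictMono I → StrictMono J →
      (ord t ((QU * QL * N * (TL * TU)).submatrix I J).det =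
        sInf {m : ℕ∞ | ∃ S : Fin k → Fin r, StrictMono S ∧ (∀ s, I s ≤ S s) ∧
          m = ord t ((QL * N * (TL * TU)).submatrix S J).det}) ∧
      (ord t ((QU * QL * N * (TL * TU)).submatrix I J).det =
        sInf {m : ℕ∞ | ∃ H : Fin k → Fin r, StrictMono H ∧ (∀ s, H s ≤ I s) ∧
          m = ord t ((QhU * N * (TL * TU)).submatrix H J).det +
            ((wt r μ H - wt r μ I : ℕ) : ℕ∞)}) ∧
      (ord t ((QU * QL * N * (TL * TU)).submatrix I J).det =
        sInf {m : ℕ∞ | ∃ H : Fin k → Fin r, StrictMono H ∧ (∀ s, H s ≤ J s) ∧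
          m = ord t ((QU * QL * N * TL).submatrix I H).det})

/-- `N*` is `μ`-generic: it arises from some full-rank `N` via the generic factorization. -/
def MuGeneric (t : R) (r : ℕ) (μ : ℕ → ℕ) (Nstar : Matrix (Fin r) (Fin r) R) : Prop :=
  ∃ N : Matrix (Fin r) (Fin r) R, N.det ≠ 0 ∧ MuGenericVia t r μ N Nstar

/-- A Littlewood–Richardson filling of the skew shape `λ/μ` with content `ν`
(1-indexed triangular array `k i j`, `1 ≤ i ≤ j ≤ r`). -/
def IsLRFilling (r : ℕ) (μ ν lam : ℕ → ℕ) (k : ℕ → ℕ → ℤ) : Prop :=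
  (∀ j, 1 ≤ j → j ≤ r → (μ j : ℤ) + ∑ s ∈ Finset.Icc 1 j, k s j = (lam j : ℤ)) ∧
  (∀ i, 1 ≤ i → i ≤ r → ∑ s ∈ Finset.Icc i r, k i s = (ν i : ℤ)) ∧
  (∀ i j, 1 ≤ i → i ≤ j → j ≤ r → 0 ≤ k i j) ∧
  (∀ i j, 2 ≤ j → j ≤ r → 1 ≤ i → i ≤ j →
    (μ j : ℤ) + ∑ s ∈ Finset.Icc 1 i, k s j ≤
      (μ (j - 1) : ℤ) + ∑ s ∈ Finset.Icc 1 (i - 1), k s (j - 1)) ∧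
  (∀ i j, 1 ≤ i → i ≤ r - 1 → i ≤ j → j ≤ r - 1 →
    ∑ s ∈ Finset.Icc (i + 1) (j + 1), k (i + 1) s ≤ ∑ s ∈ Finset.Icc i j, k i s)

/-- The determinantal formula defining the integers `k i j` from a `μ`-generic matrix:
`k_{1j} + ⋯ + k_{ij} = ‖N*(rows {1,…,j−i−1} ∪ {j,…,r})‖ − ‖N*(rows {1,…,j−i} ∪ {j+1,…,r})‖`. -/
def DetFormula (t : R) {r : ℕ} (Nstar : Matrix (Fin r) (Fin r) R) (k : ℕ → ℕ → ℤ) : Prop :=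
  ∀ i j, 1 ≤ i → i ≤ j → j ≤ r →
    ∑ s ∈ Finset.Icc 1 i, k s j =
      dMinorZ t Nstar (j - i - 1) j - dMinorZ t Nstar (j - i) (j + 1)

end Defs

section LRHelpers

variable {R : Type*} [CommRing R]

/-! ### Order helpers -/

lemma le_ord_iff {t a : R} {c : ℕ∞} : c ≤ ord t a ↔ ∀ n : ℕ, (n : ℕ∞) ≤ c → t ^ n ∣ a := by
  constructor
  · intro h n hn; exact pow_dvd_of_le_emultiplicity (hn.trans h)
  · intro h
    induction c with
    | top =>
      rw [top_le_iff]
      rw [ord, emultiplicity_eq_top]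
      rintro ⟨n, hn⟩
      exact hn (h (n + 1) le_top)
    | coe n => exact le_emultiplicity_of_pow_dvd (h n le_rfl)

lemma le_ord_sum {ι : Type*} (s : Finset ι) (f : ι → R) {t : R} {c : ℕ∞}
    (h : ∀ i ∈ s, c ≤ ord t (f i)) : c ≤ ord t (∑ i ∈ s, f i) := by
  rw [le_ord_iff]
  intro n hn
  exact Finset.dvd_sum fun i hi => (le_ord_iff.1 (h i hi)) n hn

lemma ord_mul [IsDomain R] {t : R} (hp : Prime t) (a b : R) :
    ord t (a * b) = ord t a + ord t b := emultiplicity_mul hp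

lemma ord_neg (t a : R) : ord t (-a) = ord t a := emultiplicity_neg t a

lemma le_ord_prod {n : ℕ} (t : R) (c : Fin n → ℕ) (f : Fin n → R) (h : ∀ i, t ^ (c i) ∣ f i) :
    ((∑ i, c i : ℕ) : ℕ∞) ≤ ord t (∏ i, f i) := by
  rw [le_ord_iff]
  intro m hm
  have h1 : t ^ (∑ i, c i) ∣ ∏ i, f i := by
    rw [← Finset.prod_pow_eq_pow_sum]
    exact Finset.prod_dvd_prod_of_dvd _ _ (fun i _ => h i)
  exact dvd_trans (pow_dvd_pow t (by exact_mod_cast hm)) h1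

lemma le_ord_zero {t : R} {c : ℕ∞} : c ≤ ord t 0 := by
  rw [le_ord_iff]; intro n _; exact dvd_zero _

/-! ### Strict monotone index combinatorics -/

lemma sm_gap {n r : ℕ} {J : Fin n → Fin r} (hJ : StrictMono J) :
    ∀ (d : ℕ) (p : Fin n) (h : p.1 + d < n), (J p).1 + d ≤ (J ⟨p.1 + d, h⟩).1 := by
  intro d
  induction d with
  | zero =>
    intro p h
    have : (⟨p.1 + 0, h⟩ : Fin n) = p := by ext; simp
    rw [this]; omega
  | succ d ih =>
    intro p h
    have h1 := ih p (by omega)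
    have h2 : J ⟨p.1 + d, by omega⟩ < J ⟨p.1 + d + 1, by omega⟩ := by
      apply hJ; rw [Fin.lt_def]; simp
    rw [Fin.lt_def] at h2
    have he : (⟨p.1 + (d + 1), h⟩ : Fin n) = ⟨p.1 + d + 1, by omega⟩ := by ext; simp; omega
    rw [he]
    omega

lemma sm_le_lastCol {n r : ℕ} (hn : n ≤ r) {J : Fin n → Fin r} (hJ : StrictMono J)
    (s : Fin n) : (J s).1 ≤ r - n + s.1 := by
  have hs := s.isLt
  have hlast : s.1 + (n - 1 - s.1) < n := by omega
  have h1 := sm_gap hJ (n - 1 - s.1) s hlast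
  have h2 := (J ⟨s.1 + (n - 1 - s.1), hlast⟩).isLt
  omega

lemma lastCols_strictMono {r n : ℕ} (h : n ≤ r) : StrictMono (lastCols r n h) := by
  intro p q hpq
  rw [Fin.lt_def] at hpq ⊢
  simp only [lastCols]
  omega

lemma le_lastCols {r n : ℕ} (h : n ≤ r) {J : Fin n → Fin r} (hJ : StrictMono J) (s : Fin n) :
    J s ≤ lastCols r n h s := by
  rw [Fin.le_def]
  exact sm_le_lastCol h hJ s

lemma sm_min {n r : ℕ} {I H : Fin n → Fin r} (hI : StrictMono I) (hH : StrictMono H) :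
    StrictMono (fun s => min (I s) (H s)) := by
  intro p q hpq
  simp only [lt_min_iff, min_lt_iff]
  constructor
  · left; exact hI hpq
  · right; exact hH hpq

lemma exists_sort {n r : ℕ} (g : Fin n → Fin r) (hg : Function.Injective g) :
    ∃ (H : Fin n → Fin r) (π : Equiv.Perm (Fin n)), StrictMono H ∧ g = H ∘ π := by
  classical
  set s : Finset (Fin r) := Finset.univ.image g with hs
  have hcard : s.card = n := by
    rw [hs, Finset.card_image_of_injective _ hg, Finset.card_univ, Fintype.card_fin]
  set H : Fin n → Fin r := fun i => s.orderEmbOfFin hcard i with hH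
  have hHsm : StrictMono H := (s.orderEmbOfFin hcard).strictMono
  have hmem : ∀ i, g i ∈ s := fun i => Finset.mem_image_of_mem g (Finset.mem_univ i)
  have hHmem : ∀ i, H i ∈ s := fun i => s.orderEmbOfFin_mem hcard i
  let e1 : Fin n → {x // x ∈ s} := fun i => ⟨g i, hmem i⟩
  let e2 : Fin n → {x // x ∈ s} := fun i => ⟨H i, hHmem i⟩
  have hcards : Fintype.card {x // x ∈ s} = n := by rw [Fintype.card_coe, hcard]
  have he1 : Function.Bijective e1 := by
    rw [Fintype.bijective_iff_injective_and_card]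
    exact ⟨fun a b hab => hg (congrArg Subtype.val hab), by simp [hcards]⟩
  have he2 : Function.Bijective e2 := by
    rw [Fintype.bijective_iff_injective_and_card]
    exact ⟨fun a b hab => hHsm.injective (congrArg Subtype.val hab), by simp [hcards]⟩
  refine ⟨H, (Equiv.ofBijective e1 he1).trans (Equiv.ofBijective e2 he2).symm, hHsm, ?_⟩
  funext i
  have : e2 ((Equiv.ofBijective e2 he2).symm (e1 i)) = e1 i :=
    (Equiv.ofBijective e2 he2).apply_symm_apply (e1 i)
  simpa [e1, e2, Function.comp, Equiv.trans_apply, Equiv.ofBijective_apply] using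
    (congrArg Subtype.val this).symm

/-! ### Rearrangement inequality -/

lemma filter_perm_card {n : ℕ} (π : Equiv.Perm (Fin n)) (p : Fin n → Prop) [DecidablePred p] :
    (Finset.univ.filter (fun i => p (π i))).card = (Finset.univ.filter p).card := by
  have : (Finset.univ.filter (fun i => p (π i)))
      = (Finset.univ.filter p).map π.symm.toEmbedding := by
    ext i
    simp only [Finset.mem_filter, Finset.mem_univ, true_and, Finset.mem_map,
      Equiv.coe_toEmbedding, Equiv.symm_apply_eq]
    constructor
    · intro h; exact ⟨π i, h, by simp⟩
    · rintro ⟨j, hj, rfl⟩; simpa using hj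
  rw [this, Finset.card_map]

lemma rearrange_max {n : ℕ} (a b : Fin n → ℕ)
    (ha : ∀ p q : Fin n, p ≤ q → a q ≤ a p) (hb : ∀ p q : Fin n, p ≤ q → b q ≤ b p)
    (π : Equiv.Perm (Fin n)) :
    ∑ i, max (a i) (b i) ≤ ∑ i, max (a (π i)) (b i) := by
  classical
  set N := (Finset.univ.sup a ⊔ Finset.univ.sup b) + 1 with hN
  have hva : ∀ x : Fin n, a x < N := fun x => by
    have := Finset.le_sup (f := a) (Finset.mem_univ x)
    omega
  have hvb : ∀ x : Fin n, b x < N := fun x => by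
    have := Finset.le_sup (f := b) (Finset.mem_univ x)
    omega
  have hcard : ∀ v, v < N → ((Finset.range N).filter (fun m => m < v)).card = v := by
    intro v hv
    rw [show (Finset.range N).filter (fun m => m < v) = Finset.range v by
      ext m; simp only [Finset.mem_filter, Finset.mem_range]; omega]
    exact Finset.card_range v
  have expand : ∀ f : Fin n → ℕ, (∀ x, f x < N) →
      ∑ i, f i = ∑ m ∈ Finset.range N, (Finset.univ.filter (fun i => m < f i)).card := by
    intro f hf
    calc ∑ i, f i = ∑ i, ((Finset.range N).filter (fun m => m < f i)).card := by
          refine Finset.sum_congr rfl fun i _ => ?_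
          rw [hcard _ (hf i)]
      _ = ∑ i, ∑ m ∈ Finset.range N, if m < f i then 1 else 0 := by
          refine Finset.sum_congr rfl fun i _ => ?_
          rw [Finset.card_filter]
      _ = ∑ m ∈ Finset.range N, ∑ i, if m < f i then 1 else 0 := Finset.sum_comm
      _ = ∑ m ∈ Finset.range N, (Finset.univ.filter (fun i => m < f i)).card := by
          refine Finset.sum_congr rfl fun m _ => ?_
          rw [Finset.card_filter]
  rw [expand _ (fun x => by have := hva x; have := hvb x; simp only [sup_lt_iff]; omega),
      expand _ (fun x => by have := hva (π x); have := hvb x; simp only [sup_lt_iff]; omega)]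
  apply Finset.sum_le_sum
  intro m _
  have hsplit1 : Finset.univ.filter (fun i => m < max (a i) (b i))
      = Finset.univ.filter (fun i => m < a i) ∪ Finset.univ.filter (fun i => m < b i) := by
    ext i; simp [lt_max_iff]
  have hsplit2 : Finset.univ.filter (fun i => m < max (a (π i)) (b i))
      = Finset.univ.filter (fun i => m < a (π i)) ∪ Finset.univ.filter (fun i => m < b i) := by
    ext i; simp [lt_max_iff]
  rw [hsplit1, hsplit2]
  set Sa := Finset.univ.filter (fun i => m < a i) with hSa
  set Sb := Finset.univ.filter (fun i => m < b i) with hSb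
  set Sa' := Finset.univ.filter (fun i => m < a (π i)) with hSa'
  have hcardSa : Sa'.card = Sa.card := filter_perm_card π (fun i => m < a i)
  have hnest : Sa ⊆ Sb ∨ Sb ⊆ Sa := by
    by_contra hcon
    push_neg at hcon
    obtain ⟨h1, h2⟩ := hcon
    rw [Finset.not_subset] at h1 h2
    obtain ⟨u, hu, hun⟩ := h1
    obtain ⟨v, hv, hvn⟩ := h2
    simp only [hSa, hSb, Finset.mem_filter, Finset.mem_univ, true_and] at hu hun hv hvn
    rcases le_total u v with h | h
    · exact hun (lt_of_lt_of_le hv (hb u v h))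
    · exact hvn (lt_of_lt_of_le hu (ha v u h))
  rcases hnest with h | h
  · rw [Finset.union_eq_right.mpr h]
    exact Finset.card_le_card Finset.subset_union_right
  · rw [Finset.union_eq_left.mpr h]
    rw [← hcardSa]
    exact Finset.card_le_card Finset.subset_union_left

lemma rearrange_tsub {n : ℕ} (a b : Fin n → ℕ)
    (ha : ∀ p q : Fin n, p ≤ q → a q ≤ a p) (hb : ∀ p q : Fin n, p ≤ q → b q ≤ b p)
    (π : Equiv.Perm (Fin n)) :
    ∑ i, (a i - b i) ≤ ∑ i, (a (π i) - b i) := by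
  have key1 : ∀ (c : Fin n → ℕ), ∑ i, (c i - b i) = ∑ i, max (c i) (b i) - ∑ i, b i := by
    intro c
    have h0 : ∀ i, c i - b i = max (c i) (b i) - b i := fun i => by omega
    calc ∑ i, (c i - b i) = ∑ i, (max (c i) (b i) - b i) := by
          exact Finset.sum_congr rfl fun i _ => h0 i
      _ = ∑ i, max (c i) (b i) - ∑ i, b i :=
          Finset.sum_tsub_distrib _ (fun i _ => le_max_right _ _)
  rw [key1 a]
  have h2 : ∑ i, (a (π i) - b i) = ∑ i, max (a (π i)) (b i) - ∑ i, b i := key1 (fun i => a (π i))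
  rw [h2]
  exact Nat.sub_le_sub_right (rearrange_max a b ha hb π) _

/-! ### Determinant expansion -/

lemma expand_det {r n : ℕ} (A B : Matrix (Fin r) (Fin r) R) (I J : Fin n → Fin r) :
    ((A * B).submatrix I J).det
      = ∑ g : Fin n → Fin r, (∏ i, A (I i) (g i)) * (B.submatrix g J).det := by
  classical
  rw [Matrix.submatrix_mul A B I id J Function.bijective_id]
  have h1 : (A.submatrix I id * B.submatrix id J)
      = fun i => ∑ h : Fin r, A (I i) h • (fun j => B h (J j)) := by
    funext i j
    simp [Matrix.mul_apply]
  have hdet : ∀ M : Matrix (Fin n) (Fin n) R, M.det = (Matrix.detRowAlternating (R := R)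
      (n := Fin n)).toMultilinearMap M := fun M => rfl
  rw [hdet, h1]
  rw [MultilinearMap.map_sum]
  refine Finset.sum_congr rfl fun g _ => ?_
  have h2 : ((Matrix.detRowAlternating (R := R) (n := Fin n)).toMultilinearMap
      (fun i => A (I i) (g i) • (fun j => B (g i) (J j))))
      = (∏ i, A (I i) (g i)) • ((Matrix.detRowAlternating (R := R)
      (n := Fin n)).toMultilinearMap (fun i => (fun j => B (g i) (J j)))) :=
    MultilinearMap.map_smul_univ _ _ _
  rw [h2]
  rw [smul_eq_mul]
  congr 1

/-! ### Partition weight facts -/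

lemma mu_antitone {r : ℕ} {μ : ℕ → ℕ} (hμ : ∀ i, 1 ≤ i → i < r → μ (i + 1) ≤ μ i) :
    ∀ a b, 1 ≤ a → a ≤ b → b ≤ r → μ b ≤ μ a := by
  intro a b ha hab
  induction b, hab using Nat.le_induction with
  | base => intro _; exact le_rfl
  | succ m hm ih =>
    intro hm1
    have hd1 := ih (by omega)
    have hd2 := hμ m (by omega) (by omega)
    omega

lemma wt_le {r : ℕ} {μ : ℕ → ℕ} (hμ' : ∀ a b, 1 ≤ a → a ≤ b → b ≤ r → μ b ≤ μ a)
    {n : ℕ} {H I : Fin n → Fin r} (hle : ∀ s, H s ≤ I s) :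
    wt r μ I ≤ wt r μ H := by
  apply Finset.sum_le_sum
  intro s _
  exact hμ' ((H s).1 + 1) ((I s).1 + 1) (by omega) (by have := hle s; rw [Fin.le_def] at this; omega)
    (by have := (I s).isLt; omega)

/-! ### Consequences of genericity -/

lemma generic_claim1 {t : R} {r : ℕ} {μ : ℕ → ℕ} {W : Matrix (Fin r) (Fin r) R}
    (h : MuGeneric t r μ W) {n : ℕ} (hn : n ≤ r) {I J : Fin n → Fin r}
    (hI : StrictMono I) (hJ : StrictMono J) :
    ord t ((W.submatrix I (lastCols r n hn)).det) ≤ ord t ((W.submatrix I J).det) := by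
  obtain ⟨N, -, QU, QL, TL, TU, QhL, QhU, hfac, -, -, -, -, -, -, -, -, -, -, -, -, -, -, hE⟩ := h
  subst hfac
  rw [(hE n hn I J hI hJ).2.2, (hE n hn I (lastCols r n hn) hI (lastCols_strictMono hn)).2.2]
  apply sInf_le_sInf
  rintro m ⟨H, hH, hHJ, rfl⟩
  exact ⟨H, hH, fun s => le_lastCols hn hH s, rfl⟩

lemma generic_m1 {t : R} {r : ℕ} {μ : ℕ → ℕ} {W : Matrix (Fin r) (Fin r) R}
    (h : MuGeneric t r μ W) {n : ℕ} (hn : n ≤ r) {I I' J : Fin n → Fin r}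
    (hI : StrictMono I) (hI' : StrictMono I') (hJ : StrictMono J)
    (hle : ∀ s, I s ≤ I' s) :
    ord t ((W.submatrix I J).det) ≤ ord t ((W.submatrix I' J).det) := by
  obtain ⟨N, -, QU, QL, TL, TU, QhL, QhU, hfac, -, -, -, -, -, -, -, -, -, -, -, -, -, -, hE⟩ := h
  subst hfac
  rw [(hE n hn I J hI hJ).1, (hE n hn I' J hI' hJ).1]
  apply sInf_le_sInf
  rintro m ⟨S, hS, hSle, rfl⟩
  exact ⟨S, hS, fun s => (hle s).trans (hSle s), rfl⟩

lemma generic_m2 {t : R} {r : ℕ} {μ : ℕ → ℕ} {W : Matrix (Fin r) (Fin r) R}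
    (hμ' : ∀ a b, 1 ≤ a → a ≤ b → b ≤ r → μ b ≤ μ a)
    (h : MuGeneric t r μ W) {n : ℕ} (hn : n ≤ r) {I I' J : Fin n → Fin r}
    (hI : StrictMono I) (hI' : StrictMono I') (hJ : StrictMono J)
    (hle : ∀ s, I s ≤ I' s) :
    ord t ((W.submatrix I' J).det) + (wt r μ I' : ℕ∞)
      ≤ ord t ((W.submatrix I J).det) + (wt r μ I : ℕ∞) := by
  obtain ⟨N, -, QU, QL, TL, TU, QhL, QhU, hfac, -, -, -, -, -, -, -, -, -, -, -, -, -, -, hE⟩ := h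
  subst hfac
  have e2I := (hE n hn I J hI hJ).2.1
  have e2I' := (hE n hn I' J hI' hJ).2.1
  have hne : {m : ℕ∞ | ∃ H : Fin n → Fin r, StrictMono H ∧ (∀ s, H s ≤ I s) ∧
      m = ord t ((QhU * N * (TL * TU)).submatrix H J).det +
        ((wt r μ H - wt r μ I : ℕ) : ℕ∞)}.Nonempty := ⟨_, I, hI, fun s => le_refl _, rfl⟩
  have hmem := csInf_mem hne
  rw [← e2I] at hmem
  obtain ⟨H, hHsm, hHI, heq⟩ := hmem
  have hle1 : ord t (((QU * QL * N * (TL * TU)).submatrix I' J)).det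
      ≤ ord t ((QhU * N * (TL * TU)).submatrix H J).det +
        ((wt r μ H - wt r μ I' : ℕ) : ℕ∞) := by
    rw [e2I']
    exact sInf_le ⟨H, hHsm, fun s => (hHI s).trans (hle s), rfl⟩
  have hwI : wt r μ I ≤ wt r μ H := wt_le hμ' hHI
  have hwI' : wt r μ I' ≤ wt r μ H := wt_le hμ' (fun s => (hHI s).trans (hle s))
  calc ord t (((QU * QL * N * (TL * TU)).submatrix I' J)).det + (wt r μ I' : ℕ∞)
      ≤ (ord t ((QhU * N * (TL * TU)).submatrix H J).det +
        ((wt r μ H - wt r μ I' : ℕ) : ℕ∞)) + (wt r μ I' : ℕ∞) := add_le_add_left hle1 _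
    _ = ord t ((QhU * N * (TL * TU)).submatrix H J).det + (wt r μ H : ℕ∞) := by
        rw [add_assoc, ← Nat.cast_add, Nat.sub_add_cancel hwI']
    _ = (ord t ((QhU * N * (TL * TU)).submatrix H J).det +
        ((wt r μ H - wt r μ I : ℕ) : ℕ∞)) + (wt r μ I : ℕ∞) := by
        rw [add_assoc, ← Nat.cast_add, Nat.sub_add_cancel hwI]
    _ = ord t (((QU * QL * N * (TL * TU)).submatrix I J)).det + (wt r μ I : ℕ∞) := by
        rw [← heq]

/-! ### The key invariance bound -/

lemma inner_bound [IsDomain R] {t : R} (hp : Prime t) {r : ℕ} {μ : ℕ → ℕ}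
    {W C : Matrix (Fin r) (Fin r) R} (hgen : MuGeneric t r μ W)
    {n : ℕ} (hn : n ≤ r) {H : Fin n → Fin r} (hH : StrictMono H) :
    ord t ((W.submatrix H (lastCols r n hn)).det)
      ≤ ord t (((W * C).submatrix H (lastCols r n hn)).det) := by
  set J0 := lastCols r n hn with hJ0
  have htr : ((W * C).submatrix H J0).det = ((Cᵀ * Wᵀ).submatrix J0 H).det := by
    rw [← Matrix.det_transpose, Matrix.transpose_submatrix, Matrix.transpose_mul]
  rw [htr, expand_det]
  apply le_ord_sum
  intro g _
  by_cases hinj : Function.Injective g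
  · obtain ⟨L, π, hL, hgL⟩ := exists_sort g hinj
    have hsub : (Wᵀ.submatrix L H).submatrix π id = Wᵀ.submatrix g H := by
      rw [Matrix.submatrix_submatrix, ← hgL]
      rfl
    have hbase : ord t ((W.submatrix H J0).det) ≤ ord t ((Wᵀ.submatrix L H).det) := by
      have hdet : (Wᵀ.submatrix L H).det = (W.submatrix H L).det := by
        rw [← Matrix.transpose_submatrix, Matrix.det_transpose]
      rw [hdet]
      exact generic_claim1 hgen hn hH hL
    rcases Int.units_eq_one_or (Equiv.Perm.sign π) with hs | hs
    · have hdg : (Wᵀ.submatrix g H).det = (Wᵀ.submatrix L H).det := by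
        rw [← hsub, Matrix.det_permute, hs]; simp
      rw [hdg, ord_mul hp]
      exact hbase.trans (self_le_add_left _ _)
    · have hdg : (Wᵀ.submatrix g H).det = -(Wᵀ.submatrix L H).det := by
        rw [← hsub, Matrix.det_permute, hs]; simp
      rw [hdg, mul_neg, ord_neg, ord_mul hp]
      exact hbase.trans (self_le_add_left _ _)
  · obtain ⟨u, v, huv, hne⟩ := Function.not_injective_iff.1 hinj
    have hdet0 : (Wᵀ.submatrix g H).det = 0 := by
      apply Matrix.det_zero_of_row_eq hne
      funext j'
      simp [Matrix.submatrix_apply, huv]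
    rw [hdet0, mul_zero]
    exact le_ord_zero

lemma key_bound [IsDomain R] {t : R} (hp : Prime t) {r : ℕ} {μ : ℕ → ℕ}
    (hμ' : ∀ a b, 1 ≤ a → a ≤ b → b ≤ r → μ b ≤ μ a)
    {W Q C : Matrix (Fin r) (Fin r) R}
    (hQ : ∀ i j : Fin r, t ^ (μ (j.1 + 1) - μ (i.1 + 1)) ∣ Q i j)
    (hgen : MuGeneric t r μ W)
    {n : ℕ} (hn : n ≤ r) {I : Fin n → Fin r} (hI : StrictMono I) :
    ord t ((W.submatrix I (lastCols r n hn)).det)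
      ≤ ord t (((Q * W * C).submatrix I (lastCols r n hn)).det) := by
  set J0 := lastCols r n hn with hJ0
  rw [mul_assoc, expand_det]
  apply le_ord_sum
  intro g _
  by_cases hinj : Function.Injective g
  · obtain ⟨H, π, hH, hgH⟩ := exists_sort g hinj
    have hsub : ((W * C).submatrix H J0).submatrix π id = (W * C).submatrix g J0 := by
      rw [Matrix.submatrix_submatrix, ← hgH]
      rfl
    set L : Fin n → Fin r := fun s => min (I s) (H s) with hLdef
    have hLsm : StrictMono L := sm_min hI hH
    have hLI : ∀ s, L s ≤ I s := fun s => min_le_left _ _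
    have hLH : ∀ s, L s ≤ H s := fun s => min_le_right _ _
    have hwt : wt r μ I ≤ wt r μ L := wt_le hμ' hLI
    -- chain: x_I ≤ ↑(wt L - wt I) + x_H
    have hm2 := generic_m2 hμ' hgen hn hLsm hI (lastCols_strictMono hn) hLI
    have hm1 := generic_m1 hgen hn hLsm hH (lastCols_strictMono hn) hLH
    have hchain : ord t ((W.submatrix I J0).det)
        ≤ ((wt r μ L - wt r μ I : ℕ) : ℕ∞) + ord t ((W.submatrix H J0).det) := by
      have hstep : ord t ((W.submatrix I J0).det) + (wt r μ I : ℕ∞)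
          ≤ (((wt r μ L - wt r μ I : ℕ) : ℕ∞) + ord t ((W.submatrix H J0).det))
            + (wt r μ I : ℕ∞) := by
        calc ord t ((W.submatrix I J0).det) + (wt r μ I : ℕ∞)
            ≤ ord t ((W.submatrix L J0).det) + (wt r μ L : ℕ∞) := hm2
          _ = ord t ((W.submatrix L J0).det) +
              (((wt r μ L - wt r μ I : ℕ) : ℕ∞) + (wt r μ I : ℕ∞)) := by
              rw [← Nat.cast_add, Nat.sub_add_cancel hwt]
          _ = (ord t ((W.submatrix L J0).det) + ((wt r μ L - wt r μ I : ℕ) : ℕ∞))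
              + (wt r μ I : ℕ∞) := by rw [add_assoc]
          _ ≤ (ord t ((W.submatrix H J0).det) + ((wt r μ L - wt r μ I : ℕ) : ℕ∞))
              + (wt r μ I : ℕ∞) := by
              exact add_le_add_left (add_le_add_left hm1 _) _
          _ = (((wt r μ L - wt r μ I : ℕ) : ℕ∞) + ord t ((W.submatrix H J0).det))
              + (wt r μ I : ℕ∞) := by rw [add_comm (ord t ((W.submatrix H J0).det))]
      exact (WithTop.add_le_add_iff_right (WithTop.coe_ne_top)).1 hstep
    -- rearrangement bound for the Q-coefficients
    have hrearr : (wt r μ L - wt r μ I : ℕ) ≤ ∑ x, (μ ((g x).1 + 1) - μ ((I x).1 + 1)) := by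
      have ha : ∀ p q : Fin n, p ≤ q → μ ((H q).1 + 1) ≤ μ ((H p).1 + 1) := by
        intro p q hpq
        have h1 : (H p).1 ≤ (H q).1 := by
          have := hH.monotone hpq; rw [Fin.le_def] at this; omega
        exact hμ' _ _ (by omega) (by omega) (by have := (H q).isLt; omega)
      have hb : ∀ p q : Fin n, p ≤ q → μ ((I q).1 + 1) ≤ μ ((I p).1 + 1) := by
        intro p q hpq
        have h1 : (I p).1 ≤ (I q).1 := by
          have := hI.monotone hpq; rw [Fin.le_def] at this; omega
        exact hμ' _ _ (by omega) (by omega) (by have := (I q).isLt; omega)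
      have h2 : ∑ x, (μ ((H x).1 + 1) - μ ((I x).1 + 1))
          ≤ ∑ x, (μ ((H (π x)).1 + 1) - μ ((I x).1 + 1)) :=
        rearrange_tsub _ _ ha hb π
      have h3 : ∑ x, (μ ((g x).1 + 1) - μ ((I x).1 + 1))
          = ∑ x, (μ ((H (π x)).1 + 1) - μ ((I x).1 + 1)) := by
        refine Finset.sum_congr rfl fun x _ => ?_
        rw [hgH]; rfl
      have h4 : wt r μ L - wt r μ I ≤ ∑ x, (μ ((H x).1 + 1) - μ ((I x).1 + 1)) := by
        have hterm : ∀ x, μ ((H x).1 + 1) - μ ((I x).1 + 1)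
            = μ ((L x).1 + 1) - μ ((I x).1 + 1) := by
          intro x
          rcases le_total (I x) (H x) with hc | hc
          · have hLx : L x = I x := by rw [hLdef]; exact min_eq_left hc
            have hmle : μ ((H x).1 + 1) ≤ μ ((I x).1 + 1) := by
              have h1 : (I x).1 ≤ (H x).1 := by rw [Fin.le_def] at hc; omega
              exact hμ' _ _ (by omega) (by omega) (by have := (H x).isLt; omega)
            rw [hLx]; omega
          · have hLx : L x = H x := by rw [hLdef]; exact min_eq_right hc
            rw [hLx]
        rw [Finset.sum_congr rfl (fun x _ => hterm x)]
        have hsum : wt r μ L ≤ (∑ x, (μ ((L x).1 + 1) - μ ((I x).1 + 1))) + wt r μ I := by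
          rw [wt, wt, ← Finset.sum_add_distrib]
          apply Finset.sum_le_sum
          intro x _
          omega
        rw [wt, wt] at hsum ⊢
        omega
      omega
    have hprod : ((∑ x, (μ ((g x).1 + 1) - μ ((I x).1 + 1)) : ℕ) : ℕ∞)
        ≤ ord t (∏ x, Q (I x) (g x)) :=
      le_ord_prod t _ _ (fun x => hQ (I x) (g x))
    have hcore : ord t ((W.submatrix I J0).det)
        ≤ ord t (∏ x, Q (I x) (g x)) + ord t (((W * C).submatrix H J0).det) := by
      calc ord t ((W.submatrix I J0).det)
          ≤ ((wt r μ L - wt r μ I : ℕ) : ℕ∞) + ord t ((W.submatrix H J0).det) := hchain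
        _ ≤ ((∑ x, (μ ((g x).1 + 1) - μ ((I x).1 + 1)) : ℕ) : ℕ∞)
            + ord t (((W * C).submatrix H J0).det) := by
            exact add_le_add (Nat.cast_le.2 hrearr) (inner_bound hp hgen hn hH)
        _ ≤ ord t (∏ x, Q (I x) (g x)) + ord t (((W * C).submatrix H J0).det) :=
            add_le_add_left hprod _
    rcases Int.units_eq_one_or (Equiv.Perm.sign π) with hs | hs
    · have hdg : ((W * C).submatrix g J0).det = ((W * C).submatrix H J0).det := by
        rw [← hsub, Matrix.det_permute, hs]; simp
      rw [hdg, ord_mul hp]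
      exact hcore
    · have hdg : ((W * C).submatrix g J0).det = -((W * C).submatrix H J0).det := by
        rw [← hsub, Matrix.det_permute, hs]; simp
      rw [hdg, mul_neg, ord_neg, ord_mul hp]
      exact hcore
  · obtain ⟨u, v, huv, hne⟩ := Function.not_injective_iff.1 hinj
    have hdet0 : ((W * C).submatrix g J0).det = 0 := by
      apply Matrix.det_zero_of_row_eq hne
      funext j'
      simp [Matrix.submatrix_apply, huv]
    rw [hdet0, mul_zero]
    exact le_ord_zero

/-! ### Admissible entry divisibility -/

lemma entry_dvd [IsDomain R] {t : R} (ht0 : t ≠ 0) {r : ℕ} {μ : ℕ → ℕ}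
    {Q P : Matrix (Fin r) (Fin r) R}
    (hQP : Dmu t r μ * Q = P * Dmu t r μ) (i j : Fin r) :
    t ^ (μ (j.1 + 1) - μ (i.1 + 1)) ∣ Q i j := by
  have h := Matrix.ext_iff.2 hQP i j
  simp only [Dmu, Matrix.diagonal_mul, Matrix.mul_diagonal] at h
  by_cases hle : μ (j.1 + 1) ≤ μ (i.1 + 1)
  · rw [Nat.sub_eq_zero_of_le hle, pow_zero]
    exact one_dvd _
  · push_neg at hle
    have hb : μ (j.1 + 1) = μ (i.1 + 1) + (μ (j.1 + 1) - μ (i.1 + 1)) := by omega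
    rw [hb, pow_add] at h
    have h2 : t ^ μ (i.1 + 1) * Q i j
        = t ^ μ (i.1 + 1) * (P i j * t ^ (μ (j.1 + 1) - μ (i.1 + 1))) := by
      rw [h]; ring
    have h3 := mul_left_cancel₀ (pow_ne_zero _ ht0) h2
    exact ⟨P i j, by rw [h3]; ring⟩

end LRHelpers


theorem stmt18 {R : Type*} [CommRing R] [IsDomain R] [IsDiscreteValuationRing R]
    [CharZero (IsLocalRing.ResidueField R)]
    (t : R) (ht : Irreducible t) (r : ℕ) (μ : ℕ → ℕ)
    (hμ : ∀ i, 1 ≤ i → i < r → μ (i + 1) ≤ μ i)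
    (Nstar Nhat : Matrix (Fin r) (Fin r) R)
    (h1 : MuGeneric t r μ Nstar) (h2 : MuGeneric t r μ Nhat)
    (hpe : PairEquiv (Dmu t r μ) Nstar (Dmu t r μ) Nhat)
    (k k' : ℕ → ℕ → ℤ) (hk : DetFormula t Nstar k) (hk' : DetFormula t Nhat k')
    (i j : ℕ) (hi1 : 1 ≤ i) (hij : i ≤ j) (hjr : j ≤ r) :
    k i j = k' i j := by
  classical
  have hp : Prime t := UniqueFactorizationMonoid.irreducible_iff_prime.mp ht
  have ht0 : t ≠ 0 := ht.ne_zero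
  have hμ' := mu_antitone hμ
  obtain ⟨P, Q, T, hPu, hQu, hTu, hPD, hQN⟩ := hpe
  -- Nhat = Q * Nstar * T⁻¹ and Nstar = Q⁻¹ * Nhat * T
  have hNhat : Q * Nstar * T⁻¹ = Nhat := by
    rw [hQN, mul_assoc, Matrix.mul_nonsing_inv T hTu, mul_one]
  have hNstar : Q⁻¹ * Nhat * T = Nstar := by
    rw [mul_assoc, ← hQN, ← mul_assoc, Matrix.nonsing_inv_mul Q hQu, one_mul]
  -- entry bounds for Q and Q⁻¹
  have hDQ : Dmu t r μ * Q = P * Dmu t r μ := hPD.symm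
  have hQdvd := entry_dvd ht0 hDQ
  have hDQinv : Dmu t r μ * Q⁻¹ = P⁻¹ * Dmu t r μ := by
    calc Dmu t r μ * Q⁻¹ = (P⁻¹ * P) * (Dmu t r μ * Q⁻¹) := by
          rw [Matrix.nonsing_inv_mul P hPu, one_mul]
      _ = P⁻¹ * ((P * Dmu t r μ) * Q⁻¹) := by simp only [mul_assoc]
      _ = P⁻¹ * ((Dmu t r μ * Q) * Q⁻¹) := by rw [hPD]
      _ = P⁻¹ * Dmu t r μ := by
          rw [mul_assoc (Dmu t r μ), Matrix.mul_nonsing_inv Q hQu, mul_one]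
  have hQinvdvd := entry_dvd ht0 hDQinv
  -- equality of right-justified minor orders
  have main : ∀ (n : ℕ) (hn : n ≤ r) (I : Fin n → Fin r), StrictMono I →
      ord t ((Nstar.submatrix I (lastCols r n hn)).det)
        = ord t ((Nhat.submatrix I (lastCols r n hn)).det) := by
    intro n hn I hI
    apply le_antisymm
    · have h := key_bound hp hμ' hQdvd h1 hn hI (C := T⁻¹)
      rwa [hNhat] at h
    · have h := key_bound hp hμ' hQinvdvd h2 hn hI (C := T)
      rwa [hNstar] at h
  -- transfer to dMinorZ
  have dmz : ∀ a b : ℕ, dMinorZ t Nstar a b = dMinorZ t Nhat a b := by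
    intro a b
    have hcard : (rowsSet r a b).card ≤ r := by
      simpa using (rowsSet r a b).card_le_univ
    have hmain := main (rowsSet r a b).card hcard
      (fun p => (rowsSet r a b).orderEmbOfFin rfl p)
      ((rowsSet r a b).orderEmbOfFin rfl).strictMono
    unfold dMinorZ ordZ rsMinor
    exact congrArg _ (multiplicity_eq_of_emultiplicity_eq hmain)
  -- final arithmetic
  have hsum : ∀ m, 1 ≤ m → m ≤ j →
      (∑ s ∈ Finset.Icc 1 m, k s j) = (∑ s ∈ Finset.Icc 1 m, k' s j) := by
    intro m hm hmj
    rw [hk m j hm hmj hjr, hk' m j hm hmj hjr, dmz, dmz]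
  obtain ⟨i', rfl⟩ : ∃ i', i = i' + 1 := ⟨i - 1, by omega⟩
  by_cases hi' : i' = 0
  · subst hi'
    have hA := hsum 1 le_rfl (by omega)
    simpa using hA
  · have hA := hsum (i' + 1) (by omega) hij
    have hB := hsum i' (by omega) (by omega)
    rw [Finset.sum_Icc_succ_top (by omega), Finset.sum_Icc_succ_top (by omega)] at hA
    omega
end

section
/- Let μ = (6,3,1), D_μ = diag(t^6, t^3, t), and consider the 3×3 matrices over R given by N = [[t^8, t^7, t^4], [0, t^9, 2·t^6], [0, 0, t^7]] and N' = [[t^8, t^7, t^4], [0, t^9, 4·t^6], [0, 0, 3·t^7]]. Then the pairs (D_μ, N) and (D_μ, N') are not pair equivalent: there exists no triple (P, Q, T) ∈ GL_3(R)^3 such that P·D_μ·Q^{-1} = D_μ and Q·N·T^{-1} = N'. -/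
open Matrix

private lemma not_dvd_six {R : Type*} [CommRing R] [IsDomain R] [IsDiscreteValuationRing R]
    [CharZero (IsLocalRing.ResidueField R)] (t : R) (ht : Irreducible t) : ¬ t ∣ (6:R) := by
  intro h
  have hm : t ∈ IsLocalRing.maximalIdeal R := ht.not_isUnit
  have h6 : (6:R) ∈ IsLocalRing.maximalIdeal R := Ideal.mem_of_dvd _ h hm
  have h0 : (IsLocalRing.residue R) (6:R) = 0 := by
    rwa [IsLocalRing.residue_eq_zero_iff] at *
  rw [map_ofNat] at h0
  exact OfNat.ofNat_ne_zero 6 h0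

theorem stmt19 {R : Type*} [CommRing R] [IsDomain R] [IsDiscreteValuationRing R]
    [CharZero (IsLocalRing.ResidueField R)]
    (t : R) (ht : Irreducible t) :
    ¬ PairEquiv
      (Dmu t 3 (fun i => if i = 1 then 6 else if i = 2 then 3 else 1))
      (!![t ^ 8, t ^ 7, t ^ 4; 0, t ^ 9, 2 * t ^ 6; 0, 0, t ^ 7])
      (Dmu t 3 (fun i => if i = 1 then 6 else if i = 2 then 3 else 1))
      (!![t ^ 8, t ^ 7, t ^ 4; 0, t ^ 9, 4 * t ^ 6; 0, 0, 3 * t ^ 7]) := by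
  rintro ⟨P, Q, T, hPd, hQd, hTd, h1, h2⟩
  have ht0 : t ≠ 0 := ht.ne_zero
  -- entries of P * D = D * Q
  have d10 : P 1 0 * t ^ 6 = t ^ 3 * Q 1 0 := by
    have := congrFun (congrFun h1 1) 0
    simp [Dmu, Matrix.mul_apply, Matrix.diagonal, Fin.sum_univ_three] at this
    linear_combination this
  have d20 : P 2 0 * t ^ 6 = t * Q 2 0 := by
    have := congrFun (congrFun h1 2) 0
    simp [Dmu, Matrix.mul_apply, Matrix.diagonal, Fin.sum_univ_three] at this
    linear_combination this
  have d21 : P 2 1 * t ^ 3 = t * Q 2 1 := by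
    have := congrFun (congrFun h1 2) 1
    simp [Dmu, Matrix.mul_apply, Matrix.diagonal, Fin.sum_univ_three] at this
    linear_combination this
  have hQ10 : Q 1 0 = t ^ 3 * P 1 0 :=
    mul_left_cancel₀ (pow_ne_zero 3 ht0) (by linear_combination -d10)
  have hQ20 : Q 2 0 = t ^ 5 * P 2 0 :=
    mul_left_cancel₀ ht0 (by linear_combination -d20)
  have hQ21 : Q 2 1 = t ^ 2 * P 2 1 :=
    mul_left_cancel₀ ht0 (by linear_combination -d21)
  -- entries of Q * N = N' * T
  have f20 : Q 2 0 * t ^ 8 = 3 * t ^ 7 * T 2 0 := by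
    have := congrFun (congrFun h2 2) 0
    simp [Matrix.mul_apply, Fin.sum_univ_three, Matrix.vecHead, Matrix.vecTail] at this
    linear_combination this
  have f21 : Q 2 0 * t ^ 7 + Q 2 1 * t ^ 9 = 3 * t ^ 7 * T 2 1 := by
    have := congrFun (congrFun h2 2) 1
    simp [Matrix.mul_apply, Fin.sum_univ_three, Matrix.vecHead, Matrix.vecTail] at this
    linear_combination this
  have f22 : Q 2 0 * t ^ 4 + Q 2 1 * (2 * t ^ 6) + Q 2 2 * t ^ 7 = 3 * t ^ 7 * T 2 2 := by
    have := congrFun (congrFun h2 2) 2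
    simp [Matrix.mul_apply, Fin.sum_univ_three, Matrix.vecHead, Matrix.vecTail] at this
    linear_combination this
  have f11 : Q 1 0 * t ^ 7 + Q 1 1 * t ^ 9 = t ^ 9 * T 1 1 + 4 * t ^ 6 * T 2 1 := by
    have := congrFun (congrFun h2 1) 1
    simp [Matrix.mul_apply, Fin.sum_univ_three, Matrix.vecHead, Matrix.vecTail] at this
    linear_combination this
  have f12 : Q 1 0 * t ^ 4 + Q 1 1 * (2 * t ^ 6) + Q 1 2 * t ^ 7
      = t ^ 9 * T 1 2 + 4 * t ^ 6 * T 2 2 := by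
    have := congrFun (congrFun h2 1) 2
    simp [Matrix.mul_apply, Fin.sum_univ_three, Matrix.vecHead, Matrix.vecTail] at this
    linear_combination this
  have f01 : Q 0 0 * t ^ 7 + Q 0 1 * t ^ 9 = t ^ 8 * T 0 1 + t ^ 7 * T 1 1 + t ^ 4 * T 2 1 := by
    have := congrFun (congrFun h2 0) 1
    simp [Matrix.mul_apply, Fin.sum_univ_three, Matrix.vecHead, Matrix.vecTail] at this
    linear_combination this
  have f02 : Q 0 0 * t ^ 4 + Q 0 1 * (2 * t ^ 6) + Q 0 2 * t ^ 7
      = t ^ 8 * T 0 2 + t ^ 7 * T 1 2 + t ^ 4 * T 2 2 := by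
    have := congrFun (congrFun h2 0) 2
    simp [Matrix.mul_apply, Fin.sum_univ_three, Matrix.vecHead, Matrix.vecTail] at this
    linear_combination this
  -- solve for (multiples of) entries of T
  have hu21 : 3 * T 2 1 = t ^ 5 * P 2 0 + t ^ 4 * P 2 1 :=
    mul_left_cancel₀ (pow_ne_zero 7 ht0)
      (by linear_combination -f21 + t ^ 7 * hQ20 + t ^ 9 * hQ21)
  have hu22 : 3 * T 2 2 = t ^ 2 * P 2 0 + 2 * t * P 2 1 + Q 2 2 :=
    mul_left_cancel₀ (pow_ne_zero 7 ht0)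
      (by linear_combination -f22 + t ^ 4 * hQ20 + 2 * t ^ 6 * hQ21)
  have hu11 : 3 * T 1 1 = 3 * t * P 1 0 + 3 * Q 1 1 - 4 * t ^ 2 * P 2 0 - 4 * t * P 2 1 :=
    mul_left_cancel₀ (pow_ne_zero 9 ht0)
      (by linear_combination -3 * f11 + 3 * t ^ 7 * hQ10 - 4 * t ^ 6 * hu21)
  -- the three congruences mod t
  have E3 : 3 * t * P 1 0 + 6 * Q 1 1 + 3 * t * Q 1 2
      = 3 * t ^ 3 * T 1 2 + 4 * t ^ 2 * P 2 0 + 8 * t * P 2 1 + 4 * Q 2 2 :=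
    mul_left_cancel₀ (pow_ne_zero 6 ht0)
      (by linear_combination 3 * f12 - 3 * t ^ 4 * hQ10 + 4 * t ^ 6 * hu22)
  have E1 : 3 * Q 0 0 + 3 * t ^ 2 * Q 0 1
      = 3 * t * T 0 1 + (3 * t * P 1 0 + 3 * Q 1 1 - 4 * t ^ 2 * P 2 0 - 4 * t * P 2 1)
        + t ^ 2 * P 2 0 + t * P 2 1 :=
    mul_left_cancel₀ (pow_ne_zero 7 ht0)
      (by linear_combination 3 * f01 + t ^ 7 * hu11 + t ^ 4 * hu21)
  have E2 : 3 * Q 0 0 + 6 * t ^ 2 * Q 0 1 + 3 * t ^ 3 * Q 0 2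
      = 3 * t ^ 4 * T 0 2 + 3 * t ^ 3 * T 1 2 + t ^ 2 * P 2 0 + 2 * t * P 2 1 + Q 2 2 :=
    mul_left_cancel₀ (pow_ne_zero 4 ht0)
      (by linear_combination 3 * f02 + t ^ 4 * hu22)
  have c3 : t ∣ 6 * Q 1 1 - 4 * Q 2 2 :=
    ⟨3 * t ^ 2 * T 1 2 + 4 * t * P 2 0 + 8 * P 2 1 - 3 * P 1 0 - 3 * Q 1 2,
      by linear_combination E3⟩
  have c1 : t ∣ 3 * Q 0 0 - 3 * Q 1 1 :=
    ⟨3 * T 0 1 + 3 * P 1 0 - 4 * t * P 2 0 - 4 * P 2 1 + t * P 2 0 + P 2 1 - 3 * t * Q 0 1,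
      by linear_combination E1⟩
  have c2 : t ∣ 3 * Q 0 0 - Q 2 2 :=
    ⟨3 * t ^ 3 * T 0 2 + 3 * t ^ 2 * T 1 2 + t * P 2 0 + 2 * P 2 1 - 6 * t * Q 0 1
      - 3 * t ^ 2 * Q 0 2, by linear_combination E2⟩
  obtain ⟨w1, hc1⟩ := c1
  obtain ⟨w2, hc2⟩ := c2
  obtain ⟨w3, hc3⟩ := c3
  have c0 : t ∣ 6 * Q 1 1 :=
    ⟨4 * w2 - 4 * w1 - w3, by linear_combination -hc3 + 4 * hc2 - 4 * hc1⟩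
  have hp : Prime t := UniqueFactorizationMonoid.irreducible_iff_prime.mp ht
  have hQ11 : t ∣ Q 1 1 := by
    rcases hp.2.2 _ _ c0 with h | h
    · exact absurd h (not_dvd_six t ht)
    · exact h
  obtain ⟨w, hw⟩ := hQ11
  have hdet : t ∣ Q.det :=
    ⟨Q 0 0 * w * Q 2 2 - t * (Q 0 0 * Q 1 2 * P 2 1) - t ^ 2 * (Q 0 1 * P 1 0 * Q 2 2)
      + t ^ 4 * (Q 0 1 * Q 1 2 * P 2 0) + t ^ 4 * (Q 0 2 * P 1 0 * P 2 1)
      - t ^ 5 * (Q 0 2 * w * P 2 0),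
      by rw [Matrix.det_fin_three, hw, hQ10, hQ20, hQ21]; ring⟩
  exact ht.not_isUnit (isUnit_of_dvd_unit hdet hQd)
end
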